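/- Let ν be a non-negative measure on [a,b] ⊂ ℝ whose support has more than s points, and let ν^{(s)} = Σ_{j=1}^s α_j δ_{t_j} be its Gauss-Jacobi quadrature measure of order s (exact on polynomials of degree ≤ 2s-1, nodes in (a,b)). If f : [a,b] → ℝ is 2s-times continuously differentiable with f^{(2s)}(t) ≥ 0 on (a,b), then ∫_a^b f dν^{(s)} ≤ ∫_a^b f dν. -/

import Mathlib

open MeasureTheory

section GaussJacobiAux
open Polynomial

private lemma contDiff_polyeval {n : ℕ∞} (p : ℝ[X]) : ContDiff ℝ n fun x => p.eval x := by
  induction p using Polynomial.induction_on with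
  | C a => simpa using contDiff_const (c := a)
  | add p q hp hq => simpa using hp.add hq
  | monomial m a _ =>
    have : (fun x : ℝ => (C a * X ^ (m + 1)).eval x) = fun x => a * x ^ (m + 1) := by
      funext x; simp
    rw [this]
    exact contDiff_const.mul (contDiff_id.pow (m + 1))

private lemma iteratedDeriv_polyeval (p : ℝ[X]) (n : ℕ) :
    iteratedDeriv n (fun x => p.eval x) = fun x => (derivative^[n] p).eval x := by
  induction n with
  | zero => simp
  | succ n ih =>
    rw [iteratedDeriv_succ, ih]
    funext x
    rw [Function.iterate_succ_apply']
    exact Polynomial.deriv (p := derivative^[n] p)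

private lemma iterate_derivative_of_natDegree_le (q : ℝ[X]) (n : ℕ) (h : q.natDegree ≤ n) :
    derivative^[n] q = C ((n.factorial : ℝ) * q.coeff n) := by
  have hd : (derivative^[n] q).natDegree ≤ 0 :=
    (q.natDegree_iterate_derivative n).trans (by omega)
  rw [Polynomial.eq_C_of_natDegree_le_zero hd, coeff_iterate_derivative]
  simp [Nat.descFactorial_self, nsmul_eq_mul]

private lemma rolle_finset {a b : ℝ} (h : ℝ → ℝ) (hdiff : Differentiable ℝ h)
    (Z : Finset ℝ) (hZ : (Z : Set ℝ) ⊆ Set.Icc a b) (hcard : 2 ≤ Z.card)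
    (hzero : ∀ z ∈ Z, h z = 0) :
    ∃ Z' : Finset ℝ, Z'.card = Z.card - 1 ∧ (Z' : Set ℝ) ⊆ Set.Ioo a b ∧
      (∀ c ∈ Z', deriv h c = 0) ∧ ∀ c ∈ Z', c ∉ Z := by
  set N := Z.card with hN
  have e : Fin N ≃o Z := Z.orderIsoOfFin rfl
  have emono : ∀ {i j : Fin N}, i ≤ j → ((e i : ℝ) ≤ (e j : ℝ)) := by
    intro i j hij
    exact_mod_cast (e.le_iff_le.mpr hij)
  have emonos : ∀ {i j : Fin N}, i < j → ((e i : ℝ) < (e j : ℝ)) := by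
    intro i j hij
    exact_mod_cast (e.lt_iff_lt.mpr hij)
  have key : ∀ i : Fin (N - 1), ∃ c ∈ Set.Ioo ((e ⟨i, by omega⟩ : ℝ)) ((e ⟨i + 1, by omega⟩ : ℝ)),
      deriv h c = 0 := by
    intro i
    have hlt : ((e ⟨i, by omega⟩ : ℝ)) < ((e ⟨i + 1, by omega⟩ : ℝ)) := by
      apply emonos
      simp [Fin.lt_def]
    have h1 : h (e ⟨i, by omega⟩) = 0 := hzero _ (e ⟨i, by omega⟩).2
    have h2 : h (e ⟨i + 1, by omega⟩) = 0 := hzero _ (e ⟨i + 1, by omega⟩).2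
    obtain ⟨c, hc, hc0⟩ := exists_deriv_eq_zero hlt hdiff.continuous.continuousOn (h1.trans h2.symm)
    exact ⟨c, hc, hc0⟩
  choose c hc hc0 using key
  have cmono : StrictMono c := by
    intro i j hij
    calc c i < (e ⟨i + 1, by omega⟩ : ℝ) := (hc i).2
      _ ≤ (e ⟨j, by omega⟩ : ℝ) := emono (by simp [Fin.le_def]; omega)
      _ < c j := (hc j).1
  refine ⟨Finset.image c Finset.univ, ?_, ?_, ?_, ?_⟩
  · rw [Finset.card_image_of_injective _ cmono.injective, Finset.card_univ, Fintype.card_fin]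
  · intro y hy
    simp only [Finset.coe_image, Set.mem_image] at hy
    obtain ⟨i, -, rfl⟩ := hy
    constructor
    · exact lt_of_le_of_lt (hZ (e ⟨i, by omega⟩).2).1 (hc i).1
    · exact lt_of_lt_of_le (hc i).2 (hZ (e ⟨i + 1, by omega⟩).2).2
  · intro y hy
    simp only [Finset.mem_image] at hy
    obtain ⟨i, -, rfl⟩ := hy
    exact hc0 i
  · intro y hy hyZ
    simp only [Finset.mem_image] at hy
    obtain ⟨i, -, rfl⟩ := hy
    set k := e.symm ⟨c i, hyZ⟩ with hk
    have hek : (e k : ℝ) = c i := by rw [hk]; simp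
    rcases le_or_gt k ⟨i, by omega⟩ with hle | hlt
    · exact absurd (hek ▸ emono hle) (not_le.mpr (hc i).1)
    · have : (⟨(i : ℕ) + 1, by omega⟩ : Fin N) ≤ k := hlt
      exact absurd (hek ▸ emono this) (not_le.mpr (hc i).2)

private lemma iter_rolle {a b : ℝ} : ∀ (n : ℕ) (h : ℝ → ℝ), ContDiff ℝ ((n : ℕ∞) + 1) h →
    ∀ Z : Finset ℝ, (Z : Set ℝ) ⊆ Set.Icc a b → n + 2 ≤ Z.card → (∀ z ∈ Z, h z = 0) →
    ∃ c ∈ Set.Ioo a b, iteratedDeriv (n + 1) h c = 0 := by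
  intro n
  induction n with
  | zero =>
    intro h hh Z hZ hcard hz
    obtain ⟨Z', hc', hsub, hd, -⟩ :=
      rolle_finset h (hh.differentiable (by simp)) Z hZ hcard hz
    have hpos : 0 < Z'.card := by omega
    obtain ⟨cc, hcc⟩ := Finset.card_pos.mp hpos
    exact ⟨cc, hsub hcc, by simpa [iteratedDeriv_one] using hd cc hcc⟩
  | succ n ih =>
    intro h hh Z hZ hcard hz
    obtain ⟨Z', hc', hsub, hd, -⟩ :=
      rolle_finset h (hh.differentiable (by simp)) Z hZ (by omega) hz
    have hh' : ContDiff ℝ ((n : ℕ∞) + 1) (deriv h) := by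
      have : ContDiff ℝ (((n : ℕ∞) + 1) + 1) h := by
        have e : (((n : ℕ∞) + 1) + 1 : WithTop ℕ∞) = ((n + 1 : ℕ) : ℕ∞) + 1 := by
          push_cast; ring
        rw [e]; exact hh
      exact (contDiff_succ_iff_deriv.mp this).2.2
    obtain ⟨cc, hccmem, hcc0⟩ :=
      ih (deriv h) hh' Z' (hsub.trans Set.Ioo_subset_Icc_self) (by omega) hd
    exact ⟨cc, hccmem, by rw [iteratedDeriv_succ']; exact hcc0⟩

private lemma hermite_exists (s : ℕ) (hs : 1 ≤ s) (t : Fin s → ℝ) (ht : Function.Injective t)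
    (v w : Fin s → ℝ) :
    ∃ p : ℝ[X], p.natDegree < 2 * s ∧ (∀ j, p.eval (t j) = v j) ∧
      (∀ j, p.derivative.eval (t j) = w j) := by
  classical
  set V := Polynomial.degreeLT ℝ (2 * s) with hV
  haveI : FiniteDimensional ℝ V :=
    LinearEquiv.finiteDimensional (Polynomial.degreeLTEquiv ℝ (2 * s)).symm
  set L : V →ₗ[ℝ] (Fin s → ℝ) × (Fin s → ℝ) :=
    LinearMap.prod
      (LinearMap.pi fun j => (Polynomial.leval (t j)).comp V.subtype)
      (LinearMap.pi fun j => (Polynomial.leval (t j)).comp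
        (Polynomial.derivative.comp V.subtype)) with hL
  have hinj : Function.Injective L := by
    rw [← LinearMap.ker_eq_bot, LinearMap.ker_eq_bot']
    intro p hp
    have hev : ∀ j, (p : ℝ[X]).eval (t j) = 0 := by
      intro j
      have := congrArg (fun z => z.1 j) hp
      simpa [hL, Polynomial.leval] using this
    have hev' : ∀ j, (derivative (p : ℝ[X])).eval (t j) = 0 := by
      intro j
      have := congrArg (fun z => z.2 j) hp
      simpa [hL, Polynomial.leval] using this
    by_contra hp0
    have hpne : (p : ℝ[X]) ≠ 0 := fun hh => hp0 (by ext : 1; simpa using hh)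
    have hmult : ∀ j, 2 ≤ (p : ℝ[X]).rootMultiplicity (t j) := by
      intro j
      exact (Polynomial.one_lt_rootMultiplicity_iff_isRoot hpne).mpr ⟨hev j, hev' j⟩
    have hdeg : (p : ℝ[X]).natDegree < 2 * s := by
      rw [Polynomial.natDegree_lt_iff_degree_lt hpne]
      exact Polynomial.mem_degreeLT.mp p.2
    have hsub : Finset.image t Finset.univ ⊆ (p : ℝ[X]).roots.toFinset := by
      intro x hx
      obtain ⟨j, -, rfl⟩ := Finset.mem_image.mp hx
      rw [Multiset.mem_toFinset, Polynomial.mem_roots hpne]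
      exact hev j
    have hcount : 2 * s ≤ Multiset.card (p : ℝ[X]).roots := by
      calc 2 * s = ∑ _j : Fin s, 2 := by simp [mul_comm]
        _ = ∑ x ∈ Finset.image t Finset.univ, 2 := by
            rw [Finset.sum_image (fun i _ j _ hij => ht hij)]
        _ ≤ ∑ x ∈ Finset.image t Finset.univ, (p : ℝ[X]).roots.count x := by
            apply Finset.sum_le_sum
            intro x hx
            obtain ⟨j, -, rfl⟩ := Finset.mem_image.mp hx
            rw [Polynomial.count_roots]
            exact hmult j
        _ ≤ ∑ x ∈ (p : ℝ[X]).roots.toFinset, (p : ℝ[X]).roots.count x :=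
            Finset.sum_le_sum_of_subset_of_nonneg hsub (fun _ _ _ => Nat.zero_le _)
        _ = Multiset.card (p : ℝ[X]).roots := Multiset.toFinset_sum_count_eq _
    exact absurd ((p : ℝ[X]).card_roots'.trans_lt hdeg) (not_lt.mpr hcount)
  have hsurj : Function.Surjective L := by
    have hrank : Module.finrank ℝ V = Module.finrank ℝ ((Fin s → ℝ) × (Fin s → ℝ)) := by
      rw [(Polynomial.degreeLTEquiv ℝ (2 * s)).finrank_eq]
      simp [Module.finrank_prod]
      ring
    exact (LinearMap.injective_iff_surjective_of_finrank_eq_finrank hrank).mp hinj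
  obtain ⟨p, hp⟩ := hsurj (v, w)
  refine ⟨(p : ℝ[X]), ?_, ?_, ?_⟩
  · rcases eq_or_ne (p : ℝ[X]) 0 with h0 | h0
    · rw [h0]; simpa using by positivity
    · rw [Polynomial.natDegree_lt_iff_degree_lt h0]
      exact Polynomial.mem_degreeLT.mp p.2
  · intro j
    have := congrArg (fun z => z.1 j) hp
    simpa [hL, Polynomial.leval] using this
  · intro j
    have := congrArg (fun z => z.2 j) hp
    simpa [hL, Polynomial.leval] using this

private lemma iteratedDeriv_sub' {n : ℕ} {f g : ℝ → ℝ} (hf : ContDiff ℝ (n : ℕ∞) f)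
    (hg : ContDiff ℝ (n : ℕ∞) g) (x : ℝ) :
    iteratedDeriv n (f - g) x = iteratedDeriv n f x - iteratedDeriv n g x := by
  simp only [← iteratedDerivWithin_univ]
  exact iteratedDerivWithin_sub (Set.mem_univ x) uniqueDiffOn_univ
    hf.contDiffWithinAt hg.contDiffWithinAt

private lemma hermite_le (a b : ℝ) (s : ℕ) (hs : 1 ≤ s)
    (t : Fin s → ℝ) (ht_inj : Function.Injective t) (ht_mem : ∀ j, t j ∈ Set.Ioo a b)
    (f : ℝ → ℝ) (hf : ContDiff ℝ (2 * s : ℕ) f)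
    (hf'' : ∀ x ∈ Set.Ioo a b, 0 ≤ iteratedDeriv (2 * s) f x)
    (H : ℝ[X]) (hHdeg : H.natDegree < 2 * s)
    (hHval : ∀ j, H.eval (t j) = f (t j))
    (hHder : ∀ j, H.derivative.eval (t j) = deriv f (t j)) :
    ∀ x ∈ Set.Icc a b, H.eval x ≤ f x := by
  classical
  intro x hx
  set W : ℝ[X] := ∏ j, (X - C (t j)) ^ 2 with hW
  have hWmonic : W.Monic := monic_prod_of_monic _ _ fun j _ => (monic_X_sub_C _).pow 2
  have hWne : W ≠ 0 := hWmonic.ne_zero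
  have hWdeg : W.natDegree = 2 * s := by
    rw [hW, Polynomial.natDegree_prod _ _ fun j _ => pow_ne_zero 2 (X_sub_C_ne_zero _)]
    simp [natDegree_pow, natDegree_X_sub_C, mul_comm]
  have hWeval : ∀ y, W.eval y = ∏ j, (y - t j) ^ 2 := by
    intro y; rw [hW, eval_prod]; simp
  have hWroot : ∀ j, W.eval (t j) = 0 := by
    intro j; rw [hWeval]; exact Finset.prod_eq_zero (Finset.mem_univ j) (by ring)
  have hWder : ∀ j, W.derivative.eval (t j) = 0 := by
    intro j
    have hdvd : (X - C (t j)) ^ 2 ∣ W := Finset.dvd_prod_of_mem _ (Finset.mem_univ j)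
    have := (Polynomial.le_rootMultiplicity_iff hWne (a := t j) (n := 2)).mpr hdvd
    exact ((Polynomial.one_lt_rootMultiplicity_iff_isRoot hWne).mp (by omega)).2
  by_cases hxt : ∃ j, x = t j
  · obtain ⟨j, rfl⟩ := hxt
    exact (hHval j).le
  · push_neg at hxt
    have hWx : 0 < W.eval x := by
      rw [hWeval]
      refine Finset.prod_pos fun j _ => ?_
      exact sq_pos_of_ne_zero (sub_ne_zero.mpr (hxt j))
    set c : ℝ := (f x - H.eval x) / W.eval x with hc
    set q : ℝ[X] := H + C c * W with hq
    set g : ℝ → ℝ := f - fun y => q.eval y with hg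
    have hgCD : ContDiff ℝ (2 * s : ℕ) g := hf.sub (contDiff_polyeval q)
    have hgdiff : Differentiable ℝ g := hgCD.differentiable (by exact_mod_cast (show 2 * s ≠ 0 by omega))
    have hgt : ∀ j, g (t j) = 0 := by
      intro j
      simp [hg, hq, hHval j, hWroot j]
    have hgx : g x = 0 := by
      simp only [hg, hq, Pi.sub_apply, eval_add, eval_mul, eval_C]
      rw [hc, div_mul_cancel₀ _ (ne_of_gt hWx)]
      ring
    have hfd : Differentiable ℝ f := hf.differentiable (by exact_mod_cast (show 2 * s ≠ 0 by omega))
    have hgfun : g = fun y => f y - q.eval y := by funext y; simp [hg]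
    have hdg : ∀ y, deriv g y = deriv f y - q.derivative.eval y := by
      intro y
      rw [hg, deriv_sub (hfd y) (Polynomial.differentiable q y), Polynomial.deriv]
    have hdgt : ∀ j, deriv g (t j) = 0 := by
      intro j
      rw [hdg, hq]
      simp [derivative_C_mul, hHder j, hWder j]
    -- zero set of g
    set Z0 : Finset ℝ := insert x (Finset.image t Finset.univ) with hZ0
    have hxnot : x ∉ Finset.image t Finset.univ := by
      simp only [Finset.mem_image, not_exists]
      rintro j ⟨-, rfl⟩
      exact hxt j rfl
    have hZ0card : Z0.card = s + 1 := by
      rw [hZ0, Finset.card_insert_of_notMem hxnot,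
        Finset.card_image_of_injective _ ht_inj, Finset.card_univ, Fintype.card_fin]
    have hZ0sub : (Z0 : Set ℝ) ⊆ Set.Icc a b := by
      intro y hy
      rw [Finset.mem_coe, hZ0, Finset.mem_insert] at hy
      rcases hy with rfl | hy
      · exact hx
      · obtain ⟨j, -, rfl⟩ := Finset.mem_image.mp hy
        exact Set.Ioo_subset_Icc_self (ht_mem j)
    have hZ0zero : ∀ z ∈ Z0, g z = 0 := by
      intro z hz
      rcases Finset.mem_insert.mp hz with rfl | hz
      · exact hgx
      · obtain ⟨j, -, rfl⟩ := Finset.mem_image.mp hz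
        exact hgt j
    obtain ⟨Z1, hZ1card, hZ1sub, hZ1zero, hZ1nZ0⟩ :=
      rolle_finset g hgdiff Z0 hZ0sub (by omega) hZ0zero
    set Z2 : Finset ℝ := Z1 ∪ Finset.image t Finset.univ with hZ2
    have hdisj : Disjoint Z1 (Finset.image t Finset.univ) := by
      rw [Finset.disjoint_left]
      intro y hy hyim
      exact hZ1nZ0 y hy (Finset.mem_insert_of_mem hyim)
    have hZ2card : Z2.card = 2 * s := by
      rw [hZ2, Finset.card_union_of_disjoint hdisj, hZ1card, hZ0card,
        Finset.card_image_of_injective _ ht_inj, Finset.card_univ, Fintype.card_fin]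
      omega
    have hZ2sub : (Z2 : Set ℝ) ⊆ Set.Icc a b := by
      intro y hy
      rw [Finset.mem_coe, hZ2, Finset.mem_union] at hy
      rcases hy with hy | hy
      · exact Set.Ioo_subset_Icc_self (hZ1sub hy)
      · obtain ⟨j, -, rfl⟩ := Finset.mem_image.mp hy
        exact Set.Ioo_subset_Icc_self (ht_mem j)
    have hZ2zero : ∀ z ∈ Z2, deriv g z = 0 := by
      intro z hz
      rcases Finset.mem_union.mp hz with hz | hz
      · exact hZ1zero z hz
      · obtain ⟨j, -, rfl⟩ := Finset.mem_image.mp hz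
        exact hdgt j
    have hdgCD : ContDiff ℝ (((2 * s - 2 : ℕ) : ℕ∞) + 1) (deriv g) := by
      have h1 : ContDiff ℝ ((((2 * s - 2 : ℕ) : ℕ∞) + 1) + 1) g := by
        have e : ((((2 * s - 2 : ℕ) : ℕ∞) + 1) + 1 : WithTop ℕ∞) = ((2 * s : ℕ) : ℕ∞) := by
          rw [show (2 * s : ℕ) = (2 * s - 2) + 1 + 1 by omega]
          push_cast
          rfl
        rw [e]; exact hgCD
      exact (contDiff_succ_iff_deriv.mp h1).2.2
    obtain ⟨ξ, hξmem, hξ0⟩ := iter_rolle (2 * s - 2) (deriv g) hdgCD Z2 hZ2sub (by omega) hZ2zero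
    have hg2s : iteratedDeriv (2 * s) g ξ = 0 := by
      rw [show 2 * s = (2 * s - 2 + 1) + 1 by omega, iteratedDeriv_succ']
      exact hξ0
    have hqCD : ContDiff ℝ ((2 * s : ℕ) : ℕ∞) fun y => q.eval y := contDiff_polyeval q
    have hsplit : iteratedDeriv (2 * s) g ξ =
        iteratedDeriv (2 * s) f ξ - iteratedDeriv (2 * s) (fun y => q.eval y) ξ := by
      rw [hg]
      exact iteratedDeriv_sub' hf hqCD ξ
    have hqcoeff : q.coeff (2 * s) = c := by
      rw [hq, coeff_add, coeff_C_mul, Polynomial.coeff_eq_zero_of_natDegree_lt hHdeg]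
      rw [show (2 * s) = W.natDegree from hWdeg.symm, hWmonic.coeff_natDegree]
      ring
    have hqdeg : q.natDegree ≤ 2 * s := by
      refine (Polynomial.natDegree_add_le _ _).trans (max_le hHdeg.le ?_)
      exact (Polynomial.natDegree_C_mul_le _ _).trans hWdeg.le
    have hqderiv : iteratedDeriv (2 * s) (fun y => q.eval y) ξ = (2 * s).factorial * c := by
      rw [iteratedDeriv_polyeval, iterate_derivative_of_natDegree_le q (2 * s) hqdeg]
      simp [hqcoeff]
    have hc0 : 0 ≤ c := by
      have h1 : iteratedDeriv (2 * s) f ξ = (2 * s).factorial * c := by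
        rw [hsplit, hqderiv] at hg2s
        linarith
      have h2 := hf'' ξ hξmem
      rw [h1] at h2
      have h3 : (0 : ℝ) < (2 * s).factorial := by exact_mod_cast (2 * s).factorial_pos
      nlinarith
    have hfin : f x - H.eval x = c * W.eval x := by
      rw [hc, div_mul_cancel₀ _ (ne_of_gt hWx)]
    nlinarith [mul_nonneg hc0 hWx.le]

end GaussJacobiAux

/-- Chebyshev–Markov extremal property of the Gauss–Jacobi quadrature: if `ν` is a
non-negative measure on `[a,b]` whose support has more than `s` points, with Gauss–Jacobi
quadrature `ν^{(s)} = Σ α_j δ_{t_j}` (nodes in `(a,b)`, positive weights, exact on polynomials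
of degree `≤ 2s-1`), then `∫ f dν^{(s)} ≤ ∫ f dν` for every `2s`-times continuously
differentiable `f` with `f^{(2s)} ≥ 0` on `(a,b)`. -/
theorem gaussJacobi_le_of_nonneg_high_deriv
    (a b : ℝ) (hab : a < b) (s : ℕ) (hs : 1 ≤ s)
    (ν : Measure ℝ) [IsFiniteMeasure ν] (hν_supp : ν (Set.Icc a b)ᶜ = 0)
    (hbig : ¬ ∃ S : Finset ℝ, S.card ≤ s ∧ ν ((S : Set ℝ))ᶜ = 0)
    (t : Fin s → ℝ) (ht_inj : Function.Injective t) (ht_mem : ∀ j, t j ∈ Set.Ioo a b)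
    (α : Fin s → ℝ) (hα : ∀ j, 0 < α j)
    (hexact : ∀ p : Polynomial ℝ, p.natDegree ≤ 2 * s - 1 →
      ∑ j, α j * p.eval (t j) = ∫ x, p.eval x ∂ν)
    (f : ℝ → ℝ) (hf : ContDiff ℝ (2 * s) f)
    (hf'' : ∀ x ∈ Set.Ioo a b, 0 ≤ iteratedDeriv (2 * s) f x) :
    ∑ j, α j * f (t j) ≤ ∫ x, f x ∂ν := by
  obtain ⟨H, hHdeg, hHval, hHder⟩ :=
    hermite_exists s hs t ht_inj (fun j => f (t j)) (fun j => deriv f (t j))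
  have hle : ∀ x ∈ Set.Icc a b, H.eval x ≤ f x :=
    hermite_le a b s hs t ht_inj ht_mem f hf hf'' H hHdeg hHval hHder
  have hae : ∀ᵐ y ∂ν, y ∈ Set.Icc a b := by
    rw [MeasureTheory.ae_iff]
    have : {y | ¬ y ∈ Set.Icc a b} = (Set.Icc a b)ᶜ := rfl
    rw [this, hν_supp]
  -- integrability
  have hint : ∀ (φ : ℝ → ℝ), Continuous φ → MeasureTheory.Integrable φ ν := by
    intro φ hφ
    obtain ⟨C, hC⟩ := (isCompact_Icc (a := a) (b := b)).exists_bound_of_continuousOn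
      hφ.continuousOn
    refine MeasureTheory.Integrable.mono' (MeasureTheory.integrable_const C)
      hφ.aestronglyMeasurable ?_
    exact hae.mono fun y hy => hC y hy
  have hintf : MeasureTheory.Integrable f ν := hint f hf.continuous
  have hintH : MeasureTheory.Integrable (fun x => H.eval x) ν :=
    hint _ (Polynomial.continuous H)
  have hmono : ∫ x, H.eval x ∂ν ≤ ∫ x, f x ∂ν := by
    refine MeasureTheory.integral_mono_ae hintH hintf ?_
    exact hae.mono fun y hy => hle y hy
  have heq : ∑ j, α j * f (t j) = ∫ x, H.eval x ∂ν := by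
    rw [← hexact H (by omega)]
    exact Finset.sum_congr rfl fun j _ => by rw [hHval j]
  linarith
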